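/- A matrix A ∈ ℂ^{d×d} with λ(A) > 0 has real entries if and only if Δ_p(A) > 0 for all p ∈ (1,∞). -/

import Mathlib

open Matrix

/-- `λ(A)`: the ellipticity constant, minimum over unit vectors `ξ` of `Re(Aξ · conj ξ)`. -/
noncomputable def lamConst {d : ℕ} (A : Matrix (Fin d) (Fin d) ℂ) : ℝ :=
  sInf { r : ℝ | ∃ ξ : Fin d → ℂ, (∑ i, Complex.normSq (ξ i)) = 1 ∧
    r = (A.mulVec ξ ⬝ᵥ star ξ).re }

/-- `Δ_p(A)`: the `p`-ellipticity constant. -/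
noncomputable def DeltaConst {d : ℕ} (p : ℝ) (A : Matrix (Fin d) (Fin d) ℂ) : ℝ :=
  sInf { r : ℝ | ∃ ξ : Fin d → ℂ, (∑ i, Complex.normSq (ξ i)) = 1 ∧
    r = (A.mulVec ξ ⬝ᵥ star (ξ + ((1 - 2/p : ℝ) : ℂ) • star ξ)).re }

open Complex in
variable {d : ℕ}

noncomputable def q (A : Matrix (Fin d) (Fin d) ℂ) (ξ η : Fin d → ℂ) : ℝ :=
  (A.mulVec ξ ⬝ᵥ star η).re

lemma q_eq_sum (A : Matrix (Fin d) (Fin d) ℂ) (ξ η : Fin d → ℂ) :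
    q A ξ η = ∑ i, ∑ k, (A i k * ξ k * (starRingEnd ℂ) (η i)).re := by
  simp [q, Matrix.mulVec, dotProduct, Finset.sum_mul, Complex.re_sum]

lemma delta_expr (A : Matrix (Fin d) (Fin d) ℂ) (ξ : Fin d → ℂ) (c : ℝ) :
    (A.mulVec ξ ⬝ᵥ star (ξ + (c:ℂ) • star ξ)).re = q A ξ ξ + c * q A ξ (star ξ) := by
  have h1 : star ((c:ℂ) • star ξ) = (c:ℂ) • ξ := by
    rw [star_smul, star_star, Complex.star_def, Complex.conj_ofReal]
  rw [star_add, h1, dotProduct_add, dotProduct_smul]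
  simp [q, Complex.add_re, Complex.re_ofReal_mul, smul_eq_mul]

lemma q_smul (A : Matrix (Fin d) (Fin d) ℂ) (ξ η : Fin d → ℂ) (r : ℝ) :
    q A ((r:ℂ) • ξ) ((r:ℂ) • η) = r^2 * q A ξ η := by
  simp only [q, Matrix.mulVec_smul, smul_dotProduct, star_smul, dotProduct_smul,
    Complex.star_def, Complex.conj_ofReal, smul_eq_mul]
  rw [← mul_assoc]
  push_cast
  rw [show ((r:ℂ) * (r:ℂ)) = ((r^2 : ℝ) : ℂ) by push_cast; ring, Complex.re_ofReal_mul]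

lemma normSq_smul (ξ : Fin d → ℂ) (r : ℝ) :
    (∑ i, Complex.normSq (((r:ℂ) • ξ) i)) = r^2 * ∑ i, Complex.normSq (ξ i) := by
  simp [Complex.normSq_mul, Complex.normSq_ofReal, Finset.mul_sum, sq]



lemma point_id (c : ℝ) (α x y : ℂ) (hα : α.im = 0) :
    (α * x * (starRingEnd ℂ) y).re + c * (α * x * y).re
      = (1+c)/4 * (α * (x + (starRingEnd ℂ) x) * (starRingEnd ℂ) (y + (starRingEnd ℂ) y)).re
        + (1-c)/4 * (α * (x - (starRingEnd ℂ) x) * (starRingEnd ℂ) (y - (starRingEnd ℂ) y)).re := by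
  simp only [Complex.mul_re, Complex.mul_im, Complex.add_re, Complex.add_im,
    Complex.sub_re, Complex.sub_im, Complex.conj_re, Complex.conj_im, hα]
  ring

lemma normSq_split (x : ℂ) :
    Complex.normSq (x + (starRingEnd ℂ) x) + Complex.normSq (x - (starRingEnd ℂ) x)
      = 4 * Complex.normSq x := by
  simp only [Complex.normSq_apply, Complex.add_re, Complex.add_im, Complex.sub_re,
    Complex.sub_im, Complex.conj_re, Complex.conj_im]
  ring

lemma mem_pos {S : Set ℝ} (h : 0 < sInf S) {x : ℝ} (hx : x ∈ S) : sInf S ≤ x := by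
  refine csInf_le ?_ hx
  by_contra hb
  rw [Real.sInf_of_not_bddBelow hb] at h
  exact lt_irrefl 0 h

lemma set_nonempty {S : Set ℝ} (h : 0 < sInf S) : S.Nonempty := by
  by_contra hb
  rw [Set.not_nonempty_iff_eq_empty] at hb
  rw [hb, Real.sInf_empty] at h
  exact lt_irrefl 0 h

lemma aux_limit {a b : ℝ} (h : ∀ c : ℝ, -1 < c → c < 1 → 0 < a + c * b) : b ≤ a := by
  by_contra hab
  push_neg at hab
  have ha : 0 < a := by simpa using h 0 (by norm_num) (by norm_num)
  have hb : 0 < b := lt_trans ha hab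
  have hc1 : (-1 : ℝ) < -(a+b)/(2*b) := by
    rw [neg_div, neg_lt_neg_iff, div_lt_one (by linarith)]
    linarith
  have hc2 : -(a+b)/(2*b) < 1 := by
    have : -(a+b)/(2*b) < 0 := div_neg_of_neg_of_pos (by linarith) (by linarith)
    linarith
  have := h _ hc1 hc2
  have hbne : b ≠ 0 := ne_of_gt hb
  have : 0 < a + (-(a+b)/(2*b)) * b := this
  rw [div_mul_eq_mul_div, mul_comm (2:ℝ) b, ← div_div, mul_div_assoc, div_self hbne] at this
  nlinarith
lemma sum_id (A : Matrix (Fin d) (Fin d) ℂ) (hre : ∀ i j, (A i j).im = 0) (ξ : Fin d → ℂ) (c : ℝ) :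
    q A ξ ξ + c * q A ξ (star ξ)
      = (1+c)/4 * q A (ξ + star ξ) (ξ + star ξ) + (1-c)/4 * q A (ξ - star ξ) (ξ - star ξ) := by
  simp only [q_eq_sum, Finset.mul_sum, ← Finset.sum_add_distrib]
  refine Finset.sum_congr rfl fun i _ => ?_
  refine Finset.sum_congr rfl fun k _ => ?_
  have := point_id c (A i k) (ξ k) (ξ i) (hre i k)
  simpa [Pi.add_apply, Pi.sub_apply, Pi.star_apply, Complex.star_def, Complex.conj_conj] using this

lemma lam_le (A : Matrix (Fin d) (Fin d) ℂ) (hA : 0 < lamConst A) (ζ : Fin d → ℂ) :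
    lamConst A * (∑ i, Complex.normSq (ζ i)) ≤ q A ζ ζ := by
  set n := ∑ i, Complex.normSq (ζ i) with hn
  have hn0 : 0 ≤ n := Finset.sum_nonneg fun i _ => Complex.normSq_nonneg _
  rcases eq_or_lt_of_le hn0 with h0 | hpos
  · -- n = 0, so ζ = 0
    have hz : ζ = 0 := by
      funext i
      have := (Finset.sum_eq_zero_iff_of_nonneg (fun i _ => Complex.normSq_nonneg (ζ i))).mp h0.symm i (Finset.mem_univ i)
      exact Complex.normSq_eq_zero.mp this
    rw [hz, ← h0]
    simp [q]
  · set r := (Real.sqrt n)⁻¹ with hr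
    have hrn : r^2 * n = 1 := by
      rw [hr, ← Real.sqrt_inv]
      rw [Real.sq_sqrt (by positivity)]
      field_simp
    have hmem : q A ((r:ℂ) • ζ) ((r:ℂ) • ζ) ∈ { r : ℝ | ∃ ξ : Fin d → ℂ, (∑ i, Complex.normSq (ξ i)) = 1 ∧
        r = (A.mulVec ξ ⬝ᵥ star ξ).re } := by
      exact ⟨(r:ℂ) • ζ, by rw [normSq_smul]; exact hrn, rfl⟩
    have hle := mem_pos hA hmem
    rw [q_smul] at hle
    have : lamConst A ≤ r^2 * q A ζ ζ := hle
    have hr2 : r^2 = n⁻¹ := by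
      rw [hr, ← Real.sqrt_inv, Real.sq_sqrt (by positivity)]
    rw [hr2] at this
    calc lamConst A * n ≤ (n⁻¹ * q A ζ ζ) * n := by
          apply mul_le_mul_of_nonneg_right this hn0
      _ = q A ζ ζ := by field_simp
lemma key_ineq (A : Matrix (Fin d) (Fin d) ℂ) (h : ∀ p : ℝ, 1 < p → 0 < DeltaConst p A)
    (ζ : Fin d → ℂ) : q A ζ (star ζ) ≤ q A ζ ζ := by
  rcases eq_or_ne ζ 0 with rfl | hz
  · simp [q]
  · have hnpos : 0 < ∑ i, Complex.normSq (ζ i) := by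
      obtain ⟨i, hi⟩ := Function.ne_iff.mp hz
      have h1 : 0 < Complex.normSq (ζ i) := by
        simpa [Complex.normSq_pos] using hi
      exact lt_of_lt_of_le h1 (Finset.single_le_sum (fun i _ => Complex.normSq_nonneg (ζ i))
        (Finset.mem_univ i))
    set n := ∑ i, Complex.normSq (ζ i) with hn
    set r := (Real.sqrt n)⁻¹ with hr
    have hr2 : r^2 = n⁻¹ := by rw [hr, ← Real.sqrt_inv, Real.sq_sqrt (by positivity)]
    have hrn : r^2 * n = 1 := by rw [hr2]; field_simp
    set ξ := (r:ℂ) • ζ with hξ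
    have hunit : (∑ i, Complex.normSq (ξ i)) = 1 := by rw [hξ, normSq_smul]; exact hrn
    have hsc : ∀ c : ℝ, -1 < c → c < 1 → 0 < q A ξ ξ + c * q A ξ (star ξ) := by
      intro c hc1 hc2
      set p := 2/(1-c) with hp
      have h1c : 0 < 1 - c := by linarith
      have hp1 : 1 < p := by
        rw [hp, lt_div_iff₀ h1c]; linarith
      have hcp : 1 - 2/p = c := by
        rw [hp]; field_simp; ring
      have hΔ := h p hp1
      have hmem : q A ξ ξ + (1 - 2/p) * q A ξ (star ξ) ∈
          { r : ℝ | ∃ ξ : Fin d → ℂ, (∑ i, Complex.normSq (ξ i)) = 1 ∧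
            r = (A.mulVec ξ ⬝ᵥ star (ξ + ((1 - 2/p : ℝ) : ℂ) • star ξ)).re } :=
        ⟨ξ, hunit, (delta_expr A ξ (1 - 2/p)).symm⟩
      have := lt_of_lt_of_le hΔ (mem_pos hΔ hmem)
      rwa [hcp] at this
    have hab := aux_limit hsc
    have e1 : q A ξ ξ = r^2 * q A ζ ζ := by rw [hξ, q_smul]
    have e2 : q A ξ (star ξ) = r^2 * q A ζ (star ζ) := by
      rw [hξ]
      have : star ((r:ℂ) • ζ) = (r:ℂ) • star ζ := by
        rw [star_smul, Complex.star_def, Complex.conj_ofReal]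
      rw [this, q_smul]
    rw [e1, e2] at hab
    have hrpos : 0 < r^2 := by rw [hr2]; positivity
    exact le_of_mul_le_mul_left (by linarith) hrpos

theorem real_entries_iff_pElliptic_forall {d : ℕ} (A : Matrix (Fin d) (Fin d) ℂ)
    (hA : 0 < lamConst A) :
    (∀ i j, (A i j).im = 0) ↔ ∀ p : ℝ, 1 < p → 0 < DeltaConst p A := by
  constructor
  · intro hre p hp
    set c : ℝ := 1 - 2/p with hc
    have hp0 : 0 < p := lt_trans one_pos hp
    have hc1 : 0 < 1 + c := by
      have : 2/p < 2 := by rw [div_lt_iff₀ hp0]; linarith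
      rw [hc]; linarith
    have hc2 : 0 < 1 - c := by
      have : 0 < 2/p := by positivity
      rw [hc]; linarith
    obtain ⟨x0, ξ0, hξ0, _⟩ := set_nonempty hA
    have hm : 0 < lamConst A * min (1+c) (1-c) := mul_pos hA (lt_min hc1 hc2)
    rw [DeltaConst]
    refine lt_of_lt_of_le hm (le_csInf ⟨_, ξ0, hξ0, rfl⟩ ?_)
    rintro x ⟨ξ, hξ, rfl⟩
    rw [delta_expr, sum_id A hre ξ c]
    have hw := lam_le A hA (ξ + star ξ)
    have hz := lam_le A hA (ξ - star ξ)
    set Sw := ∑ i, Complex.normSq ((ξ + star ξ) i) with hSw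
    set Sz := ∑ i, Complex.normSq ((ξ - star ξ) i) with hSz
    have hSwn : 0 ≤ Sw := Finset.sum_nonneg fun i _ => Complex.normSq_nonneg _
    have hSzn : 0 ≤ Sz := Finset.sum_nonneg fun i _ => Complex.normSq_nonneg _
    have hsum : Sw + Sz = 4 := by
      rw [hSw, hSz, ← Finset.sum_add_distrib]
      have : ∀ i ∈ Finset.univ, Complex.normSq ((ξ + star ξ) i) + Complex.normSq ((ξ - star ξ) i)
          = 4 * Complex.normSq (ξ i) := by
        intro i _
        simpa [Pi.add_apply, Pi.sub_apply, Pi.star_apply, Complex.star_def] using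
          normSq_split (ξ i)
      rw [Finset.sum_congr rfl this, ← Finset.mul_sum, hξ, mul_one]
    set m := min (1+c) (1-c) with hmm
    have k1 : lamConst A * m * Sw ≤ (1+c) * q A (ξ + star ξ) (ξ + star ξ) := by
      have := mul_le_mul (min_le_left (1+c) (1-c)) hw
        (mul_nonneg hA.le hSwn) hc1.le
      calc lamConst A * m * Sw = m * (lamConst A * Sw) := by ring
        _ ≤ (1+c) * q A (ξ + star ξ) (ξ + star ξ) := this
    have k2 : lamConst A * m * Sz ≤ (1-c) * q A (ξ - star ξ) (ξ - star ξ) := by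
      have := mul_le_mul (min_le_right (1+c) (1-c)) hz
        (mul_nonneg hA.le hSzn) hc2.le
      calc lamConst A * m * Sz = m * (lamConst A * Sz) := by ring
        _ ≤ (1-c) * q A (ξ - star ξ) (ξ - star ξ) := this
    have h4 : lamConst A * m * Sw + lamConst A * m * Sz = lamConst A * m * 4 := by
      rw [← mul_add, hsum]
    have hfin : (1+c)/4 * q A (ξ + star ξ) (ξ + star ξ) + (1-c)/4 * q A (ξ - star ξ) (ξ - star ξ)
        = ((1+c) * q A (ξ + star ξ) (ξ + star ξ) + (1-c) * q A (ξ - star ξ) (ξ - star ξ))/4 := by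
      ring
    rw [hfin]
    have hk12 := add_le_add k1 k2
    rw [h4] at hk12
    clear_value c m
    linarith
  · intro h i j
    by_contra him
    set t : ℝ := -((A i i).re + 1)/(A i j).im with ht
    set ζ : Fin d → ℂ := (t:ℂ) • (Pi.single j 1 : Fin d → ℂ) + Complex.I • (Pi.single i 1 : Fin d → ℂ) with hζ
    have hq := key_ineq A h ζ
    have him' : ∀ k, (ζ k).im = if k = i then 1 else 0 := by
      intro k
      by_cases hk : k = i <;> by_cases hkj : k = j <;>
        (simp [hζ, Pi.single_apply, hk, hkj]; try (split_ifs <;> simp))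
    have hsz : star ζ - ζ = Pi.single i ((-2) * Complex.I) := by
      funext k
      rw [Pi.sub_apply, Pi.star_apply, Pi.single_apply]
      have hgen : star (ζ k) - ζ k = (-2 * (ζ k).im : ℝ) * Complex.I := by
        apply Complex.ext <;> simp <;> ring
      rw [hgen, him' k]
      split_ifs <;> push_cast <;> ring
    have hmv : A.mulVec ζ i = (t:ℂ) * A i j + Complex.I * A i i := by
      rw [hζ, Matrix.mulVec_add, Matrix.mulVec_smul, Matrix.mulVec_smul,
        Matrix.mulVec_single, Matrix.mulVec_single]
      simp [mul_comm]
    have hdiff : q A ζ ζ - q A ζ (star ζ) = 2 * ((A i j).im * t + (A i i).re) := by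
      have e1 : q A ζ (star ζ) = (A.mulVec ζ ⬝ᵥ ζ).re := by rw [q, star_star]
      rw [q, e1, ← Complex.sub_re, ← dotProduct_sub, hsz, dotProduct_single, hmv]
      simp [Complex.mul_re, Complex.mul_im, Complex.add_re, Complex.add_im,
        Complex.I_re, Complex.I_im, Complex.ofReal_re, Complex.ofReal_im]
      ring
    have htim : (A i j).im * t = -((A i i).re + 1) := by
      rw [ht]; field_simp
    rw [htim] at hdiff
    have : q A ζ ζ - q A ζ (star ζ) = -2 := by rw [hdiff]; ring
    linarith
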